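/- In the Gaffney–Hauser example f_t(x,y,z) = h(x) + (1+z+t)h(y), if the condition h(y) ∈ (f_t) + m·J_{h(x)} + m·J_{h(y)} + m·(h(y)) holds (where m is the maximal ideal of 𝒪_{2n+1}), then h(y) ∈ J_{h(y)} or h(x) ∈ J_{h(x)}; hence if h ∉ J_h the family {f_t} is not trivial and f_t is not R-equivalent to f_0 for t ≠ 0. -/

import Mathlib

open Filter Topology

noncomputable instance germAlgebra {α : Type*} (l : Filter α) : Algebra ℂ (Germ l ℂ) :=
  Algebra.ofModule
    (fun c x y => by
      induction x using Filter.Germ.inductionOn with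
      | h a =>
        induction y using Filter.Germ.inductionOn with
        | h b =>
          rw [← Filter.Germ.coe_smul, ← Filter.Germ.coe_mul, ← Filter.Germ.coe_mul,
            ← Filter.Germ.coe_smul, smul_mul_assoc])
    (fun c x y => by
      induction x using Filter.Germ.inductionOn with
      | h a =>
        induction y using Filter.Germ.inductionOn with
        | h b =>
          rw [← Filter.Germ.coe_smul, ← Filter.Germ.coe_mul, ← Filter.Germ.coe_mul,
            ← Filter.Germ.coe_smul, mul_smul_comm])

variable (E : Type*) [NormedAddCommGroup E] [NormedSpace ℂ E]

/-- `𝒪ₙ`: the ring of germs at `0` of analytic functions on `E`, realized as a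
subalgebra of the ring of germs at `0` of `ℂ`-valued functions. -/
noncomputable def OGerm : Subalgebra ℂ (Germ (𝓝 (0 : E)) ℂ) where
  carrier := {f | ∃ g : E → ℂ, f = ↑g ∧ AnalyticAt ℂ g 0}
  mul_mem' := by
    rintro _ _ ⟨a, rfl, ha⟩ ⟨b, rfl, hb⟩
    exact ⟨a * b, (Germ.coe_mul _ _).symm, ha.mul hb⟩
  add_mem' := by
    rintro _ _ ⟨a, rfl, ha⟩ ⟨b, rfl, hb⟩
    exact ⟨a + b, (Germ.coe_add _ _).symm, ha.add hb⟩
  algebraMap_mem' := fun c => by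
    refine ⟨fun _ => c, ?_, analyticAt_const⟩
    show (c • (1 : Germ (𝓝 (0:E)) ℂ)) = _
    rw [show (1 : Germ (𝓝 (0:E)) ℂ) = ↑(fun _ : E => (1:ℂ)) from rfl, ← Germ.coe_smul]
    congr 1
    funext x
    simp

/-- The set of elements of `𝒪` whose underlying germ is the germ of `g`. -/
def germSet (g : E → ℂ) : Set (OGerm E) := {a | (a : Germ (𝓝 (0 : E)) ℂ) = ↑g}

/-- The Jacobian ideal `J_f` of a germ `f`, generated by the germs of all (directional)
first-order partial derivatives of `f`. -/
noncomputable def Jideal (f : E → ℂ) : Ideal (OGerm E) :=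
  Ideal.span {a | ∃ v : E, (a : Germ (𝓝 (0 : E)) ℂ) = ↑(fun x => fderiv ℂ f x v)}

/-- The maximal ideal `m` of `𝒪`: germs vanishing at `0`. -/
noncomputable def mIdeal : Ideal (OGerm E) where
  carrier := {a | ∃ g : E → ℂ, (a : Germ (𝓝 (0 : E)) ℂ) = ↑g ∧ AnalyticAt ℂ g 0 ∧ g 0 = 0}
  zero_mem' := ⟨fun _ => 0, by
      rw [ZeroMemClass.coe_zero]; exact Germ.coe_zero.symm,
    analyticAt_const, rfl⟩
  add_mem' := by
    rintro a b ⟨ga, ha, haa, ha0⟩ ⟨gb, hb, hab, hb0⟩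
    exact ⟨ga + gb, by rw [AddMemClass.coe_add, ha, hb, Germ.coe_add],
      haa.add hab, by simp [ha0, hb0]⟩
  smul_mem' := by
    rintro c a ⟨ga, ha, haa, ha0⟩
    obtain ⟨gc, hc, hac⟩ := c.2
    exact ⟨gc * ga, by rw [smul_eq_mul, MulMemClass.coe_mul, ha, hc, Germ.coe_mul],
      hac.mul haa, by simp [ha0]⟩

/-- `R`-equivalence of germs `f, g : (E,0) → ℂ`: `f ∘ φ = g` near `0` for some germ of
biholomorphism `φ` fixing `0`. -/
def REquiv (f g : E → ℂ) : Prop :=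
  ∃ φ ψ : E → E, AnalyticAt ℂ φ 0 ∧ AnalyticAt ℂ ψ 0 ∧ φ 0 = 0 ∧ ψ 0 = 0 ∧
    (∀ᶠ x in 𝓝 (0 : E), ψ (φ x) = x) ∧ (∀ᶠ x in 𝓝 (0 : E), φ (ψ x) = x) ∧
    (fun x => f (φ x)) =ᶠ[𝓝 (0 : E)] g


section GHAux

variable {α : Type*} [TopologicalSpace α]

/-- Evaluation of a germ at the base point. -/
noncomputable def gval {x : α} (a : Germ (𝓝 x) ℂ) : ℂ :=
  Germ.liftOn a (fun g => g x) (fun _ _ hab => hab.eq_of_nhds)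

@[simp] lemma gval_coe {x : α} (g : α → ℂ) : gval (↑g : Germ (𝓝 x) ℂ) = g x := rfl

lemma gval_mul {x : α} (a b : Germ (𝓝 x) ℂ) : gval (a * b) = gval a * gval b := by
  induction a using Germ.inductionOn with
  | h f =>
    induction b using Germ.inductionOn with
    | h g => rw [← Germ.coe_mul]; rfl

lemma gval_add {x : α} (a b : Germ (𝓝 x) ℂ) : gval (a + b) = gval a + gval b := by
  induction a using Germ.inductionOn with
  | h f =>
    induction b using Germ.inductionOn with
    | h g => rw [← Germ.coe_add]; rfl

lemma gval_one {x : α} : gval (1 : Germ (𝓝 x) ℂ) = 1 := rfl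

lemma gval_neg {x : α} (a : Germ (𝓝 x) ℂ) : gval (-a) = - gval a := by
  induction a using Germ.inductionOn with
  | h f => rw [← Germ.coe_neg]; rfl

lemma gval_sub {x : α} (a b : Germ (𝓝 x) ℂ) : gval (a - b) = gval a - gval b := by
  rw [sub_eq_add_neg, gval_add, gval_neg, sub_eq_add_neg]

end GHAux

section GHAux2

variable {X Y G : Type*} [NormedAddCommGroup X] [NormedSpace ℂ X]
  [NormedAddCommGroup Y] [NormedSpace ℂ Y] [NormedAddCommGroup G] [NormedSpace ℂ G]

/-- The canonical element of `OGerm` attached to an analytic function. -/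
noncomputable def oelt (g : X → ℂ) (hg : AnalyticAt ℂ g 0) : OGerm X := ⟨↑g, g, rfl, hg⟩

@[simp] lemma oelt_coe (g : X → ℂ) (hg : AnalyticAt ℂ g 0) :
    ((oelt g hg : OGerm X) : Germ (𝓝 (0 : X)) ℂ) = ↑g := rfl

lemma oelt_mem_germSet (g : X → ℂ) (hg : AnalyticAt ℂ g 0) : oelt g hg ∈ germSet X g := rfl

lemma span_germSet_eq (g : X → ℂ) (hg : AnalyticAt ℂ g 0) :
    Ideal.span (germSet X g) = Ideal.span {oelt g hg} := by
  apply le_antisymm <;> rw [Ideal.span_le]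
  · intro a ha
    exact Ideal.subset_span (show a ∈ ({oelt g hg} : Set (OGerm X)) from Subtype.ext ha)
  · intro a ha
    rw [Set.mem_singleton_iff] at ha
    subst ha
    exact Ideal.subset_span (oelt_mem_germSet g hg)

lemma isUnit_of_gval_ne_zero {a : OGerm X} (ha : gval (a : Germ (𝓝 (0 : X)) ℂ) ≠ 0) :
    IsUnit a := by
  obtain ⟨g, hg, hga⟩ := a.2
  have hg0 : g 0 ≠ 0 := by rwa [hg, gval_coe] at ha
  refine IsUnit.of_mul_eq_one (oelt (fun x => (g x)⁻¹) (hga.inv hg0)) ?_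
  apply Subtype.ext
  show (a : Germ (𝓝 (0 : X)) ℂ) * ↑(fun x => (g x)⁻¹) = ((1 : OGerm X) : Germ (𝓝 (0 : X)) ℂ)
  rw [OneMemClass.coe_one, hg, ← Germ.coe_mul, ← Germ.coe_one]
  exact Germ.coe_eq.mpr
    ((hga.continuousAt.eventually_ne hg0).mono fun x hx => mul_inv_cancel₀ hx)

lemma gval_of_mem_mIdeal {a : OGerm X} (ha : a ∈ mIdeal X) :
    gval (a : Germ (𝓝 (0 : X)) ℂ) = 0 := by
  obtain ⟨g, hg, -, hg0⟩ := ha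
  rw [hg, gval_coe, hg0]

/-- Pullback of germs along a continuous linear map. -/
noncomputable def pullGerm (σ : Y →L[ℂ] X) (a : Germ (𝓝 (0 : X)) ℂ) : Germ (𝓝 (0 : Y)) ℂ :=
  a.compTendsto σ (by rw [show (0 : X) = σ 0 by rw [map_zero]]; exact σ.continuous.tendsto 0)

@[simp] lemma pullGerm_coe (σ : Y →L[ℂ] X) (g : X → ℂ) :
    pullGerm σ (↑g : Germ (𝓝 (0 : X)) ℂ) = ↑(fun y => g (σ y)) :=
  Germ.coe_compTendsto g _

lemma pullGerm_mul (σ : Y →L[ℂ] X) (a b : Germ (𝓝 (0 : X)) ℂ) :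
    pullGerm σ (a * b) = pullGerm σ a * pullGerm σ b := by
  induction a using Germ.inductionOn with
  | h f =>
    induction b using Germ.inductionOn with
    | h g =>
      rw [← Germ.coe_mul, pullGerm_coe, pullGerm_coe, pullGerm_coe, ← Germ.coe_mul]
      rfl

lemma pullGerm_add (σ : Y →L[ℂ] X) (a b : Germ (𝓝 (0 : X)) ℂ) :
    pullGerm σ (a + b) = pullGerm σ a + pullGerm σ b := by
  induction a using Germ.inductionOn with
  | h f =>
    induction b using Germ.inductionOn with
    | h g =>
      rw [← Germ.coe_add, pullGerm_coe, pullGerm_coe, pullGerm_coe, ← Germ.coe_add]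
      rfl

lemma pullGerm_one (σ : Y →L[ℂ] X) : pullGerm σ (1 : Germ (𝓝 (0 : X)) ℂ) = 1 := by
  rw [← Germ.coe_one, pullGerm_coe]; rfl

lemma pullGerm_zero (σ : Y →L[ℂ] X) : pullGerm σ (0 : Germ (𝓝 (0 : X)) ℂ) = 0 := by
  rw [← Germ.coe_zero, pullGerm_coe]; rfl

lemma gval_pullGerm (σ : Y →L[ℂ] X) (a : Germ (𝓝 (0 : X)) ℂ) :
    gval (pullGerm σ a) = gval a := by
  induction a using Germ.inductionOn with
  | h f => rw [pullGerm_coe, gval_coe, gval_coe, map_zero]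

/-- Pullback as a ring homomorphism `OGerm X →+* OGerm Y`. -/
noncomputable def pull (σ : Y →L[ℂ] X) : OGerm X →+* OGerm Y where
  toFun a := ⟨pullGerm σ (a : Germ (𝓝 (0 : X)) ℂ), by
    obtain ⟨g, hg, hga⟩ := a.2
    refine ⟨fun y => g (σ y), by rw [hg, pullGerm_coe], ?_⟩
    have h0 : AnalyticAt ℂ g (σ 0) := by rw [map_zero]; exact hga
    exact h0.comp (σ.analyticAt 0)⟩
  map_one' := Subtype.ext (by
    show pullGerm σ ((1 : OGerm X) : Germ (𝓝 (0 : X)) ℂ) = ((1 : OGerm Y) : Germ (𝓝 (0 : Y)) ℂ)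
    rw [OneMemClass.coe_one, OneMemClass.coe_one, pullGerm_one])
  map_mul' a b := Subtype.ext (by
    show pullGerm σ ((a * b : OGerm X) : Germ (𝓝 (0 : X)) ℂ) = _
    rw [MulMemClass.coe_mul, pullGerm_mul]; rfl)
  map_zero' := Subtype.ext (by
    show pullGerm σ ((0 : OGerm X) : Germ (𝓝 (0 : X)) ℂ) = ((0 : OGerm Y) : Germ (𝓝 (0 : Y)) ℂ)
    rw [ZeroMemClass.coe_zero, ZeroMemClass.coe_zero, pullGerm_zero])
  map_add' a b := Subtype.ext (by
    show pullGerm σ ((a + b : OGerm X) : Germ (𝓝 (0 : X)) ℂ) = _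
    rw [AddMemClass.coe_add, pullGerm_add]; rfl)

@[simp] lemma pull_coe (σ : Y →L[ℂ] X) (a : OGerm X) :
    ((pull σ a : OGerm Y) : Germ (𝓝 (0 : Y)) ℂ) = pullGerm σ (a : Germ (𝓝 (0 : X)) ℂ) := rfl

lemma pull_mem_mIdeal (σ : Y →L[ℂ] X) {a : OGerm X} (ha : a ∈ mIdeal X) :
    pull σ a ∈ mIdeal Y := by
  obtain ⟨g, hg, hga, hg0⟩ := ha
  refine ⟨fun y => g (σ y), by rw [pull_coe, hg, pullGerm_coe], ?_, by
    show g (σ 0) = 0; rw [map_zero, hg0]⟩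
  have h0 : AnalyticAt ℂ g (σ 0) := by rw [map_zero]; exact hga
  exact h0.comp (σ.analyticAt 0)

lemma fderiv_comp_clm (h : G → ℂ) (π : X →L[ℂ] G) {x : X}
    (hd : DifferentiableAt ℂ h (π x)) (v : X) :
    fderiv ℂ (fun p => h (π p)) x v = fderiv ℂ h (π x) (π v) := by
  have e1 : fderiv ℂ (h ∘ π) x = (fderiv ℂ h (π x)).comp (fderiv ℂ (π : X → G) x) :=
    fderiv_comp x hd π.differentiableAt
  rw [π.fderiv] at e1
  show fderiv ℂ (h ∘ π) x v = _
  rw [e1]; rfl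

lemma eventually_analytic_comp (π : X →L[ℂ] G) {h : G → ℂ} (hh : AnalyticAt ℂ h 0) :
    ∀ᶠ p in 𝓝 (0 : X), AnalyticAt ℂ h (π p) := by
  have ht : Tendsto π (𝓝 (0 : X)) (𝓝 (0 : G)) := by
    rw [show (0 : G) = π 0 by rw [map_zero]]; exact π.continuous.tendsto 0
  exact ht.eventually hh.eventually_analyticAt

/-- Pullback of a Jacobian ideal along `σ` lands in a Jacobian ideal, when the
composite projection agrees and directions can be realized. -/
lemma pull_Jideal_le (σ : Y →L[ℂ] X) (π : X →L[ℂ] G) (π' : Y →L[ℂ] G)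
    {h : G → ℂ} (hh : AnalyticAt ℂ h 0)
    (hcomp : ∀ y, π (σ y) = π' y) (hsur : ∀ v : X, ∃ w : Y, π' w = π v) :
    Ideal.map (pull σ) (Jideal X (fun p => h (π p))) ≤ Jideal Y (fun q => h (π' q)) := by
  rw [Jideal, Ideal.map_span, Ideal.span_le]
  rintro _ ⟨a, ⟨v, hav⟩, rfl⟩
  obtain ⟨w, hw⟩ := hsur v
  apply Ideal.subset_span
  refine ⟨w, ?_⟩
  rw [pull_coe, hav, pullGerm_coe]
  apply Germ.coe_eq.mpr
  filter_upwards [eventually_analytic_comp π' hh, eventually_analytic_comp (π.comp σ) hh]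
    with q hq1 hq2
  have e2 : fderiv ℂ (fun p => h (π p)) (σ q) v = fderiv ℂ h (π (σ q)) (π v) :=
    fderiv_comp_clm h π (by rw [show π (σ q) = (π.comp σ) q from rfl]; exact hq2.differentiableAt) v
  have e3 : fderiv ℂ (fun p => h (π' p)) q w = fderiv ℂ h (π' q) (π' w) :=
    fderiv_comp_clm h π' hq1.differentiableAt w
  rw [e3, e2, hcomp, hw]

/-- Pullback of a Jacobian ideal is zero when the composite lands at a critical point `0`. -/
lemma pull_Jideal_eq_zero (σ : Y →L[ℂ] X) (π : X →L[ℂ] G)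
    {h : G → ℂ} (hh : AnalyticAt ℂ h 0) (hzero : ∀ y, π (σ y) = 0)
    (hcrit : fderiv ℂ h 0 = 0) :
    Ideal.map (pull σ) (Jideal X (fun p => h (π p))) ≤ ⊥ := by
  rw [Jideal, Ideal.map_span, Ideal.span_le]
  rintro _ ⟨a, ⟨v, hav⟩, rfl⟩
  rw [SetLike.mem_coe, Ideal.mem_bot]
  apply Subtype.ext
  show pullGerm σ (a : Germ (𝓝 (0 : X)) ℂ) = ((0 : OGerm Y) : Germ (𝓝 (0 : Y)) ℂ)
  rw [ZeroMemClass.coe_zero, hav, pullGerm_coe, ← Germ.coe_zero]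
  apply Germ.coe_eq.mpr
  apply Filter.Eventually.of_forall
  intro q
  have e2 : fderiv ℂ (fun p => h (π p)) (σ q) v = fderiv ℂ h (π (σ q)) (π v) := by
    apply fderiv_comp_clm h π _ v
    rw [hzero q]; exact hh.differentiableAt
  show (fderiv ℂ (fun p => h (π p)) (σ q)) v = (0 : Y → ℂ) q
  rw [e2, hzero q, hcrit]
  rfl

end GHAux2

section GHMaps

variable (n : ℕ)

/-- first projection -/
noncomputable def pX : ((Fin n → ℂ) × (Fin n → ℂ) × ℂ) →L[ℂ] (Fin n → ℂ) :=
  ContinuousLinearMap.fst ℂ (Fin n → ℂ) ((Fin n → ℂ) × ℂ)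

/-- second projection -/
noncomputable def pY : ((Fin n → ℂ) × (Fin n → ℂ) × ℂ) →L[ℂ] (Fin n → ℂ) :=
  (ContinuousLinearMap.fst ℂ (Fin n → ℂ) ℂ).comp
    (ContinuousLinearMap.snd ℂ (Fin n → ℂ) ((Fin n → ℂ) × ℂ))

/-- last projection -/
noncomputable def pZ : ((Fin n → ℂ) × (Fin n → ℂ) × ℂ) →L[ℂ] ℂ :=
  (ContinuousLinearMap.snd ℂ (Fin n → ℂ) ℂ).comp
    (ContinuousLinearMap.snd ℂ (Fin n → ℂ) ((Fin n → ℂ) × ℂ))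

/-- `(x,y,z) ↦ (x,0,0)` -/
noncomputable def sX : ((Fin n → ℂ) × (Fin n → ℂ) × ℂ) →L[ℂ] ((Fin n → ℂ) × (Fin n → ℂ) × ℂ) :=
  (pX n).prod (0 : ((Fin n → ℂ) × (Fin n → ℂ) × ℂ) →L[ℂ] ((Fin n → ℂ) × ℂ))

/-- `(x,y,z) ↦ (0,y,0)` -/
noncomputable def sY : ((Fin n → ℂ) × (Fin n → ℂ) × ℂ) →L[ℂ] ((Fin n → ℂ) × (Fin n → ℂ) × ℂ) :=
  (0 : ((Fin n → ℂ) × (Fin n → ℂ) × ℂ) →L[ℂ] (Fin n → ℂ)).prod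
    ((pY n).prod (0 : ((Fin n → ℂ) × (Fin n → ℂ) × ℂ) →L[ℂ] ℂ))

/-- `x ↦ (x,0,0)` -/
noncomputable def iX : (Fin n → ℂ) →L[ℂ] ((Fin n → ℂ) × (Fin n → ℂ) × ℂ) :=
  (ContinuousLinearMap.id ℂ (Fin n → ℂ)).prod
    (0 : (Fin n → ℂ) →L[ℂ] ((Fin n → ℂ) × ℂ))

/-- `y ↦ (0,y,0)` -/
noncomputable def iY : (Fin n → ℂ) →L[ℂ] ((Fin n → ℂ) × (Fin n → ℂ) × ℂ) :=
  (0 : (Fin n → ℂ) →L[ℂ] (Fin n → ℂ)).prod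
    ((ContinuousLinearMap.id ℂ (Fin n → ℂ)).prod (0 : (Fin n → ℂ) →L[ℂ] ℂ))

end GHMaps

set_option maxHeartbeats 2000000
set_option synthInstance.maxHeartbeats 200000
/-- **Gaffney–Hauser example, conclusion.**  For `f_t(x,y,z) = h(x) + (1+z+t)h(y)`:
if `h(y) ∈ (f_t) + m·J_{h(x)} + m·J_{h(y)} + m·(h(y))` then `h(y) ∈ J_{h(y)}` or
`h(x) ∈ J_{h(x)}`; hence, if `h ∉ J_h` (so neither of these holds) and triviality
of the family would force this membership (the Gaffney–Hauser criterion), the family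
`{f_t}` is not trivial: `f_t` is not `R`-equivalent to `f_0` for `t ≠ 0`. -/
theorem stmt_13 {n : ℕ} (h : (Fin n → ℂ) → ℂ)
    (hh : AnalyticAt ℂ h 0) (hh0 : h 0 = 0)
    (F : ℂ → ((Fin n → ℂ) × (Fin n → ℂ) × ℂ) → ℂ)
    (hF : ∀ t p, F t p = h p.1 + (1 + p.2.2 + t) * h p.2.1)
    (Mem : ℂ → Prop)
    (hMem : ∀ t, Mem t ↔
      Ideal.span (germSet _ (fun p : (Fin n → ℂ) × (Fin n → ℂ) × ℂ => h p.2.1)) ≤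
        Ideal.span (germSet _ (F t)) ⊔
        mIdeal _ * Jideal _ (fun p : (Fin n → ℂ) × (Fin n → ℂ) × ℂ => h p.1) ⊔
        mIdeal _ * Jideal _ (fun p : (Fin n → ℂ) × (Fin n → ℂ) × ℂ => h p.2.1) ⊔
        mIdeal _ * Ideal.span (germSet _ (fun p : (Fin n → ℂ) × (Fin n → ℂ) × ℂ => h p.2.1))) :
    (∀ t : ℂ, Mem t →
      Ideal.span (germSet _ (fun p : (Fin n → ℂ) × (Fin n → ℂ) × ℂ => h p.2.1)) ≤
          Jideal _ (fun p : (Fin n → ℂ) × (Fin n → ℂ) × ℂ => h p.2.1) ∨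
      Ideal.span (germSet _ (fun p : (Fin n → ℂ) × (Fin n → ℂ) × ℂ => h p.1)) ≤
          Jideal _ (fun p : (Fin n → ℂ) × (Fin n → ℂ) × ℂ => h p.1)) ∧
    ((¬ Ideal.span (germSet (Fin n → ℂ) h) ≤ Jideal (Fin n → ℂ) h) →
      (∀ t : ℂ, t ≠ 0 → REquiv _ (F t) (F 0) → Mem t) →
      ∀ t : ℂ, t ≠ 0 → ¬ REquiv _ (F t) (F 0)) := by
  have hfy : AnalyticAt ℂ (fun p : (Fin n → ℂ) × (Fin n → ℂ) × ℂ => h p.2.1) 0 := by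
    have h0 : AnalyticAt ℂ h (pY n 0) := by rw [map_zero]; exact hh
    exact h0.comp ((pY n).analyticAt 0)
  have hfx : AnalyticAt ℂ (fun p : (Fin n → ℂ) × (Fin n → ℂ) × ℂ => h p.1) 0 := by
    have h0 : AnalyticAt ℂ h (pX n 0) := by rw [map_zero]; exact hh
    exact h0.comp ((pX n).analyticAt 0)
  have P1 : ∀ t : ℂ, Mem t →
      Ideal.span (germSet _ (fun p : (Fin n → ℂ) × (Fin n → ℂ) × ℂ => h p.2.1)) ≤
          Jideal _ (fun p : (Fin n → ℂ) × (Fin n → ℂ) × ℂ => h p.2.1) ∨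
      Ideal.span (germSet _ (fun p : (Fin n → ℂ) × (Fin n → ℂ) × ℂ => h p.1)) ≤
          Jideal _ (fun p : (Fin n → ℂ) × (Fin n → ℂ) × ℂ => h p.1) := by
    intro t hm
    rw [hMem] at hm
    have hFteq : F t = fun p : (Fin n → ℂ) × (Fin n → ℂ) × ℂ =>
        h p.1 + (1 + p.2.2 + t) * h p.2.1 := funext (hF t)
    have hFta : AnalyticAt ℂ (F t) 0 := by
      rw [hFteq]
      exact hfx.add (((analyticAt_const.add ((pZ n).analyticAt 0)).add analyticAt_const).mul hfy)
    by_cases hd : fderiv ℂ h 0 = 0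
    · -- degenerate differential: the real Gaffney–Hauser argument
      have hmem := hm (Ideal.subset_span
        (rfl : oelt (fun p : (Fin n → ℂ) × (Fin n → ℂ) × ℂ => h p.2.1) hfy ∈
          germSet _ (fun p : (Fin n → ℂ) × (Fin n → ℂ) × ℂ => h p.2.1)))
      obtain ⟨a123, h123, a4, h4, heq4⟩ := Submodule.mem_sup.mp hmem
      obtain ⟨a12, h12, a3, h3, heq3⟩ := Submodule.mem_sup.mp h123
      obtain ⟨a1, h1, a2, h2, heq2⟩ := Submodule.mem_sup.mp h12
      rw [span_germSet_eq (F t) hFta, Ideal.mem_span_singleton'] at h1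
      obtain ⟨A, hA⟩ := h1
      rw [span_germSet_eq _ hfy] at h4
      obtain ⟨c, hc, hcey⟩ := Ideal.mem_mul_span_singleton.mp h4
      have heq : a1 + a2 + a3 + a4 =
          oelt (fun p : (Fin n → ℂ) × (Fin n → ℂ) × ℂ => h p.2.1) hfy := by
        rw [heq2, heq3, heq4]
      -- pull back along (x,y,z) ↦ (x,0,0)
      have hPey : pull (sX n) (oelt (fun p : (Fin n → ℂ) × (Fin n → ℂ) × ℂ => h p.2.1) hfy)
          = 0 := by
        apply Subtype.ext
        rw [pull_coe, oelt_coe, pullGerm_coe, ZeroMemClass.coe_zero]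
        have he : (fun q : (Fin n → ℂ) × (Fin n → ℂ) × ℂ => h ((sX n q).2.1)) =
            fun _ : (Fin n → ℂ) × (Fin n → ℂ) × ℂ => (0 : ℂ) := funext fun q => hh0
        rw [he, ← Germ.coe_zero]
        rfl
      have hPef : pull (sX n) (oelt (F t) hFta) =
          oelt (fun p : (Fin n → ℂ) × (Fin n → ℂ) × ℂ => h p.1) hfx := by
        apply Subtype.ext
        rw [pull_coe, oelt_coe, pullGerm_coe, oelt_coe]
        congr 1
        funext q
        rw [hF t]
        show h q.1 + (1 + 0 + t) * h 0 = h q.1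
        rw [hh0]; ring
      have hPa3 : pull (sX n) a3 = 0 := by
        have h3' : a3 ∈ Jideal _ (fun p : (Fin n → ℂ) × (Fin n → ℂ) × ℂ => h p.2.1) :=
          Ideal.mul_le_right h3
        have hb := pull_Jideal_eq_zero (sX n) (pY n) hh (fun y => rfl) hd
          (Ideal.mem_map_of_mem (pull (sX n)) h3')
        exact (Submodule.mem_bot _).mp hb
      have hPa2 : pull (sX n) a2 ∈ Jideal _ (fun p : (Fin n → ℂ) × (Fin n → ℂ) × ℂ => h p.1) := by
        have h2' : a2 ∈ Jideal _ (fun p : (Fin n → ℂ) × (Fin n → ℂ) × ℂ => h p.1) :=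
          Ideal.mul_le_right h2
        exact pull_Jideal_le (sX n) (pX n) (pX n) hh (fun y => rfl)
          (fun v => ⟨(pX n v, 0), rfl⟩) (Ideal.mem_map_of_mem (pull (sX n)) h2')
      have hP := congrArg (pull (sX n)) heq
      rw [map_add, map_add, map_add, hPey, ← hA, map_mul, hPef, ← hcey, map_mul, hPey,
        mul_zero, hPa3] at hP
      by_cases hα : gval ((A : OGerm ((Fin n → ℂ) × (Fin n → ℂ) × ℂ)) :
          Germ (𝓝 (0 : (Fin n → ℂ) × (Fin n → ℂ) × ℂ)) ℂ) = 0
      · -- main case: pull back along (x,y,z) ↦ (0,y,0)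
        left
        have hQey : pull (sY n) (oelt (fun p : (Fin n → ℂ) × (Fin n → ℂ) × ℂ => h p.2.1) hfy)
            = oelt (fun p : (Fin n → ℂ) × (Fin n → ℂ) × ℂ => h p.2.1) hfy := by
          apply Subtype.ext
          rw [pull_coe, oelt_coe, pullGerm_coe]
          exact Germ.coe_eq.mpr (Filter.Eventually.of_forall fun y => rfl)
        have hQef : pull (sY n) (oelt (F t) hFta) =
            oelt (fun _ : (Fin n → ℂ) × (Fin n → ℂ) × ℂ => (1 : ℂ) + t) analyticAt_const *
              oelt (fun p : (Fin n → ℂ) × (Fin n → ℂ) × ℂ => h p.2.1) hfy := by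
          apply Subtype.ext
          rw [pull_coe, oelt_coe, pullGerm_coe, MulMemClass.coe_mul, oelt_coe, oelt_coe,
            ← Germ.coe_mul]
          congr 1
          funext q
          rw [hF t]
          show h 0 + (1 + 0 + t) * h q.2.1 = ((1 : ℂ) + t) * h q.2.1
          rw [hh0]; ring
        have hQa2 : pull (sY n) a2 = 0 := by
          have h2' : a2 ∈ Jideal _ (fun p : (Fin n → ℂ) × (Fin n → ℂ) × ℂ => h p.1) :=
            Ideal.mul_le_right h2
          have hb := pull_Jideal_eq_zero (sY n) (pX n) hh (fun y => rfl) hd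
            (Ideal.mem_map_of_mem (pull (sY n)) h2')
          exact (Submodule.mem_bot _).mp hb
        have hQa3 : pull (sY n) a3 ∈
            Jideal _ (fun p : (Fin n → ℂ) × (Fin n → ℂ) × ℂ => h p.2.1) := by
          have h3' : a3 ∈ Jideal _ (fun p : (Fin n → ℂ) × (Fin n → ℂ) × ℂ => h p.2.1) :=
            Ideal.mul_le_right h3
          exact pull_Jideal_le (sY n) (pY n) (pY n) hh (fun y => rfl)
            (fun v => ⟨(0, pY n v, 0), rfl⟩) (Ideal.mem_map_of_mem (pull (sY n)) h3')
        have hQ := congrArg (pull (sY n)) heq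
        rw [map_add, map_add, map_add, hQey, ← hA, map_mul, hQef, ← hcey, map_mul, hQey,
          hQa2] at hQ
        have hueq : (1 - pull (sY n) A *
              oelt (fun _ : (Fin n → ℂ) × (Fin n → ℂ) × ℂ => (1 : ℂ) + t) analyticAt_const -
              pull (sY n) c) *
            oelt (fun p : (Fin n → ℂ) × (Fin n → ℂ) × ℂ => h p.2.1) hfy
            = pull (sY n) a3 := by
          linear_combination -hQ
        have huval : gval (((1 - pull (sY n) A *
              oelt (fun _ : (Fin n → ℂ) × (Fin n → ℂ) × ℂ => (1 : ℂ) + t) analyticAt_const -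
              pull (sY n) c) : OGerm ((Fin n → ℂ) × (Fin n → ℂ) × ℂ)) :
              Germ (𝓝 (0 : (Fin n → ℂ) × (Fin n → ℂ) × ℂ)) ℂ) = 1 := by
          rw [AddSubgroupClass.coe_sub, AddSubgroupClass.coe_sub, OneMemClass.coe_one,
            MulMemClass.coe_mul, gval_sub, gval_sub, gval_one, gval_mul]
          have e1 : gval ((pull (sY n) A : OGerm ((Fin n → ℂ) × (Fin n → ℂ) × ℂ)) :
              Germ (𝓝 (0 : (Fin n → ℂ) × (Fin n → ℂ) × ℂ)) ℂ) = 0 := by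
            rw [pull_coe, gval_pullGerm]; exact hα
          have e2 : gval ((pull (sY n) c : OGerm ((Fin n → ℂ) × (Fin n → ℂ) × ℂ)) :
              Germ (𝓝 (0 : (Fin n → ℂ) × (Fin n → ℂ) × ℂ)) ℂ) = 0 :=
            gval_of_mem_mIdeal (pull_mem_mIdeal (sY n) hc)
          rw [e1, e2, zero_mul, sub_zero, sub_zero]
        have hu : IsUnit (1 - pull (sY n) A *
              oelt (fun _ : (Fin n → ℂ) × (Fin n → ℂ) × ℂ => (1 : ℂ) + t) analyticAt_const -
              pull (sY n) c) :=
          isUnit_of_gval_ne_zero (by rw [huval]; exact one_ne_zero)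
        obtain ⟨uu, huu⟩ := hu
        have heyJ : oelt (fun p : (Fin n → ℂ) × (Fin n → ℂ) × ℂ => h p.2.1) hfy ∈
            Jideal _ (fun p : (Fin n → ℂ) × (Fin n → ℂ) × ℂ => h p.2.1) := by
          have hm1 := (Jideal _ (fun p : (Fin n → ℂ) × (Fin n → ℂ) × ℂ => h p.2.1)).mul_mem_left
            (↑uu⁻¹) (hueq ▸ hQa3)
          rwa [← huu, ← mul_assoc, Units.inv_mul, one_mul] at hm1
        rw [span_germSet_eq _ hfy]
        exact Ideal.span_le.mpr (Set.singleton_subset_iff.mpr heyJ)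
      · -- the coefficient of f_t is a unit at the origin: h(x) ∈ J_{h(x)}
        right
        have hAu : IsUnit (pull (sX n) A) := by
          apply isUnit_of_gval_ne_zero
          rw [pull_coe, gval_pullGerm]
          exact hα
        obtain ⟨uu, huu⟩ := hAu
        have hmm : pull (sX n) A * oelt (fun p : (Fin n → ℂ) × (Fin n → ℂ) × ℂ => h p.1) hfx
            = - pull (sX n) a2 := by linear_combination hP
        have hexJ : oelt (fun p : (Fin n → ℂ) × (Fin n → ℂ) × ℂ => h p.1) hfx ∈
            Jideal _ (fun p : (Fin n → ℂ) × (Fin n → ℂ) × ℂ => h p.1) := by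
          have hm1 := (Jideal _ (fun p : (Fin n → ℂ) × (Fin n → ℂ) × ℂ => h p.1)).mul_mem_left
            (↑uu⁻¹) (hmm ▸ (Jideal _ (fun p : (Fin n → ℂ) × (Fin n → ℂ) × ℂ => h p.1)).neg_mem hPa2)
          rwa [← huu, ← mul_assoc, Units.inv_mul, one_mul] at hm1
        rw [span_germSet_eq _ hfx]
        exact Ideal.span_le.mpr (Set.singleton_subset_iff.mpr hexJ)
    · -- nondegenerate differential: the Jacobian ideal is everything
      left
      have hw : ∃ w : Fin n → ℂ, fderiv ℂ h 0 w ≠ 0 := by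
        by_contra hcon
        push_neg at hcon
        exact hd (ContinuousLinearMap.ext hcon)
      obtain ⟨w, hw⟩ := hw
      have han2 : AnalyticAt ℂ (fun p : (Fin n → ℂ) × (Fin n → ℂ) × ℂ =>
          fderiv ℂ h (pY n p)) 0 := by
        have h0 : AnalyticAt ℂ (fderiv ℂ h) (pY n 0) := by rw [map_zero]; exact hh.fderiv
        exact h0.comp ((pY n).analyticAt 0)
      have han3 : AnalyticAt ℂ (fun p : (Fin n → ℂ) × (Fin n → ℂ) × ℂ =>
          fderiv ℂ h p.2.1 w) 0 :=
        ((ContinuousLinearMap.apply ℂ ℂ w).analyticAt _).comp han2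
      have humem : oelt _ han3 ∈ Jideal _ (fun p : (Fin n → ℂ) × (Fin n → ℂ) × ℂ => h p.2.1) := by
        apply Ideal.subset_span
        refine ⟨((0 : Fin n → ℂ), w, (0 : ℂ)), ?_⟩
        rw [oelt_coe]
        apply Germ.coe_eq.mpr
        filter_upwards [eventually_analytic_comp (pY n) hh] with p hp
        exact (fderiv_comp_clm h (pY n) hp.differentiableAt ((0 : Fin n → ℂ), w, (0 : ℂ))).symm
      have huu : IsUnit (oelt _ han3) := by
        apply isUnit_of_gval_ne_zero
        rw [oelt_coe, gval_coe]
        exact hw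
      rw [Ideal.eq_top_of_isUnit_mem _ humem huu]
      exact le_top
  refine ⟨P1, ?_⟩
  intro hns hcrit t ht hre
  rcases P1 t (hcrit t ht hre) with hy | hx
  · have heyJ : oelt (fun p : (Fin n → ℂ) × (Fin n → ℂ) × ℂ => h p.2.1) hfy ∈
        Jideal _ (fun p : (Fin n → ℂ) × (Fin n → ℂ) × ℂ => h p.2.1) :=
      hy (Ideal.subset_span rfl)
    have hpull : pull (iY n) (oelt (fun p : (Fin n → ℂ) × (Fin n → ℂ) × ℂ => h p.2.1) hfy)
        = oelt h hh := by
      apply Subtype.ext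
      rw [pull_coe, oelt_coe, pullGerm_coe, oelt_coe]
      exact Germ.coe_eq.mpr (Filter.Eventually.of_forall fun y => rfl)
    have hle := pull_Jideal_le (iY n) (pY n) (ContinuousLinearMap.id ℂ (Fin n → ℂ)) hh
      (fun y => rfl) (fun v => ⟨pY n v, rfl⟩)
    have hmem : oelt h hh ∈ Jideal (Fin n → ℂ) h := by
      have hb := hle (Ideal.mem_map_of_mem (pull (iY n)) heyJ)
      rwa [hpull] at hb
    exact hns (by
      rw [span_germSet_eq h hh]
      exact Ideal.span_le.mpr (Set.singleton_subset_iff.mpr hmem))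
  · have hexJ : oelt (fun p : (Fin n → ℂ) × (Fin n → ℂ) × ℂ => h p.1) hfx ∈
        Jideal _ (fun p : (Fin n → ℂ) × (Fin n → ℂ) × ℂ => h p.1) :=
      hx (Ideal.subset_span rfl)
    have hpull : pull (iX n) (oelt (fun p : (Fin n → ℂ) × (Fin n → ℂ) × ℂ => h p.1) hfx)
        = oelt h hh := by
      apply Subtype.ext
      rw [pull_coe, oelt_coe, pullGerm_coe, oelt_coe]
      exact Germ.coe_eq.mpr (Filter.Eventually.of_forall fun y => rfl)
    have hle := pull_Jideal_le (iX n) (pX n) (ContinuousLinearMap.id ℂ (Fin n → ℂ)) hh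
      (fun y => rfl) (fun v => ⟨pX n v, rfl⟩)
    have hmem : oelt h hh ∈ Jideal (Fin n → ℂ) h := by
      have hb := hle (Ideal.mem_map_of_mem (pull (iX n)) hexJ)
      rwa [hpull] at hb
    exact hns (by
      rw [span_germSet_eq h hh]
      exact Ideal.span_le.mpr (Set.singleton_subset_iff.mpr hmem))
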